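/- With the boundary operator ∂ of Proposition propboundary, the kernel of the restriction of ∂ to Γ(T) ≅ R^A equals the image of the antisymmetric matrix Ω_π. Consequently dim ker(∂|_{Γ(T)}) = 2g and in combination with the surjectivity onto R_0^Σ one recovers the relation d = 2g + s − 1, where s = |Σ| and 2g = rank(Ω_π). -/

import Mathlib

open Finset

/-- partial sums along an order -/
def psum {A : Type*} [Fintype A] [DecidableEq A] {d : ℕ} (e : A ≃ Fin d)
    (χ : A → ℝ) (k : ℕ) : ℝ :=
  ∑ β ∈ Finset.univ.filter (fun β => (e β : ℕ) < k), χ β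

lemma psum_zero {A : Type*} [Fintype A] [DecidableEq A] {d : ℕ} (e : A ≃ Fin d)
    (χ : A → ℝ) : psum e χ 0 = 0 := by simp [psum]

lemma psum_succ {A : Type*} [Fintype A] [DecidableEq A] {d : ℕ} (e : A ≃ Fin d)
    (χ : A → ℝ) (k : ℕ) (hk : k < d) :
    psum e χ (k + 1) = psum e χ k + χ (e.symm ⟨k, hk⟩) := by
  have hset : Finset.univ.filter (fun β => (e β : ℕ) < k + 1)
      = insert (e.symm ⟨k, hk⟩) (Finset.univ.filter (fun β => (e β : ℕ) < k)) := by
    ext β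
    simp only [Finset.mem_filter, Finset.mem_univ, true_and, Finset.mem_insert]
    constructor
    · intro h
      rcases Nat.lt_succ_iff_lt_or_eq.mp h with h | h
      · exact Or.inr h
      · left
        have : e β = ⟨k, hk⟩ := Fin.ext h
        rw [← this, Equiv.symm_apply_apply]
    · rintro (rfl | h)
      · simp
      · omega
  unfold psum
  rw [hset, Finset.sum_insert (by simp)]
  ring

lemma psum_total {A : Type*} [Fintype A] [DecidableEq A] {d : ℕ} (e : A ≃ Fin d)
    (χ : A → ℝ) : psum e χ d = ∑ β, χ β := by
  unfold psum
  rw [Finset.filter_true_of_mem]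
  intro β _; exact (e β).isLt

open Finset Module Matrix

lemma skew_dot {n : Type*} [Fintype n] [DecidableEq n] (M : Matrix n n ℝ)
    (hM : Mᵀ = -M) (v ψ : n → ℝ) (hψ : M.mulVec ψ = 0) :
    dotProduct (M.mulVec v) ψ = 0 := by
  rw [dotProduct_comm, dotProduct_mulVec, ← Matrix.mulVec_transpose, hM,
    Matrix.neg_mulVec, hψ]
  simp

lemma skew_range {n : Type*} [Fintype n] [DecidableEq n] (M : Matrix n n ℝ)
    (hM : Mᵀ = -M) (χ : n → ℝ) :
    (∀ ψ, M.mulVec ψ = 0 → dotProduct χ ψ = 0) ↔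
      χ ∈ LinearMap.range M.mulVecLin := by
  constructor
  · intro h
    set T : EuclideanSpace ℝ n →ₗ[ℝ] EuclideanSpace ℝ n := Matrix.toEuclideanLin M with hT
    set K : Submodule ℝ (EuclideanSpace ℝ n) := LinearMap.ker T with hK
    have hmem : ∀ u : EuclideanSpace ℝ n, u ∈ K ↔ M.mulVec (WithLp.equiv 2 (n → ℝ) u) = 0 := by
      intro u
      constructor
      · intro hu
        have : WithLp.equiv 2 (n → ℝ) (T u) = M.mulVec (WithLp.equiv 2 (n → ℝ) u) := rfl
        rw [LinearMap.mem_ker.mp hu] at this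
        simpa using this.symm
      · intro hu
        have : T u = (WithLp.equiv 2 (n → ℝ)).symm (M.mulVec (WithLp.equiv 2 (n → ℝ) u)) := rfl
        rw [LinearMap.mem_ker, this, hu]
        simp
    have hinner : ∀ x y : EuclideanSpace ℝ n,
        (inner ℝ x y : ℝ) = dotProduct (WithLp.equiv 2 (n → ℝ) x) (WithLp.equiv 2 (n → ℝ) y) := by
      intro x y
      simp [PiLp.inner_apply, dotProduct, mul_comm]
    have hle : LinearMap.range T ≤ Kᗮ := by
      rintro _ ⟨v, rfl⟩
      intro u hu
      rw [hinner]
      have : WithLp.equiv 2 (n → ℝ) (T v) = M.mulVec (WithLp.equiv 2 (n → ℝ) v) := rfl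
      rw [this, dotProduct_comm]
      exact skew_dot M hM _ _ ((hmem u).mp hu)
    have hfr1 : finrank ℝ K + finrank ℝ Kᗮ = finrank ℝ (EuclideanSpace ℝ n) :=
      Submodule.finrank_add_finrank_orthogonal K
    have hfr2 : finrank ℝ (LinearMap.range T) + finrank ℝ K =
        finrank ℝ (EuclideanSpace ℝ n) := LinearMap.finrank_range_add_finrank_ker T
    have heq : LinearMap.range T = Kᗮ :=
      Submodule.eq_of_le_of_finrank_eq hle (by omega)
    have hx : (WithLp.equiv 2 (n → ℝ)).symm χ ∈ Kᗮ := by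
      intro u hu
      rw [hinner]
      simp only [Equiv.apply_symm_apply]
      rw [dotProduct_comm]
      exact h _ ((hmem u).mp hu)
    rw [← heq] at hx
    obtain ⟨v, hv⟩ := hx
    refine ⟨WithLp.equiv 2 (n → ℝ) v, ?_⟩
    have : WithLp.equiv 2 (n → ℝ) (T v) = M.mulVec (WithLp.equiv 2 (n → ℝ) v) := rfl
    rw [hv] at this
    simpa [Matrix.mulVecLin_apply] using this.symm
  · rintro ⟨v, rfl⟩ ψ hψ
    simpa [Matrix.mulVecLin_apply] using skew_dot M hM v ψ hψ

/-- difference operator `f ↦ (α ↦ f (a α) - f (b α))` as a linear map. -/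
def diffLin {A Cyc : Type*} [Fintype Cyc] (a b : A → Cyc) :
    (Cyc → ℝ) →ₗ[ℝ] (A → ℝ) where
  toFun f := fun α => f (a α) - f (b α)
  map_add' f g := by funext α; simp; ring
  map_smul' r f := by funext α; simp [mul_sub]
set_option maxHeartbeats 1000000 in
/-- the kernel of the boundary operator `∂` restricted to
`Γ(T) ≅ ℝ^A` equals the image of the antisymmetric matrix `Ω_π`; consequently
`dim ker(∂|_{Γ(T)}) = 2g = rank Ω_π` and `d = 2g + s - 1`, i.e.
`rank Ω_π + card Σ = d + 1`.  Set-up as in Statement 14. -/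
theorem stmt_15 {A : Type*} [Fintype A] [DecidableEq A]
    (d : ℕ) (hd : 2 ≤ d) (hcard : Fintype.card A = d)
    (πt πb : A ≃ Fin d)
    (hirr : ∀ k : ℕ, 1 ≤ k → k < d →
      {α | ((πt α : ℕ)) < k} ≠ {α | ((πb α : ℕ)) < k})
    (Ω : Matrix A A ℝ)
    (hΩ : ∀ α β, Ω α β =
      if πt α < πt β ∧ πb β < πb α then 1
      else if πt β < πt α ∧ πb α < πb β then -1 else 0)
    {S : Type*} [Fintype S] [DecidableEq S]
    (U V : Fin (d + 1) → S)
    (hU : Function.Injective U) (hV : Function.Injective V)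
    (hUV0 : U 0 = V 0) (hUVd : U (Fin.last d) = V (Fin.last d))
    (hdisj : ∀ i j : Fin (d + 1), U i = V j → i = j ∧ (i = 0 ∨ i = Fin.last d))
    (hrange : ∀ s : S, (∃ i, s = U i) ∨ (∃ j, s = V j))
    (σ : Equiv.Perm S)
    (hσ1 : ∀ p : Fin d, σ (U p.castSucc) = V (Fin.castSucc (πb (πt.symm p))))
    (hσ2 : ∀ p : Fin d, σ (V p.succ) = U (Fin.succ (πt (πb.symm p))))
    {Cyc : Type*} [Fintype Cyc] [DecidableEq Cyc]
    (c : S → Cyc) (hcsurj : Function.Surjective c)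
    (hcinv : ∀ s, c (σ s) = c s)
    (hcsep : ∀ s t : S, c s = c t → σ.SameCycle s t) :
    (∀ χ : A → ℝ,
      (∀ C : Cyc,
        (∑ i : Fin (d + 1), if c (U i) = C then
          ((if h : 0 < (i : ℕ) then χ (πt.symm ⟨(i : ℕ) - 1, by
              have := i.isLt; omega⟩) else 0) -
           (if h : (i : ℕ) < d then χ (πt.symm ⟨(i : ℕ), h⟩) else 0))
        else 0) = 0)
      ↔ χ ∈ LinearMap.range Ω.mulVecLin) ∧
    Ω.rank + Fintype.card Cyc = d + 1 := by
  classical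
  -- abbreviations
  set a : A → Cyc := fun α => c (U (Fin.succ (πt α))) with ha
  set b : A → Cyc := fun α => c (U (Fin.castSucc (πt α))) with hb
  set D : (Cyc → ℝ) →ₗ[ℝ] (A → ℝ) := diffLin a b with hD
  -- skew symmetry
  have hskew : Ωᵀ = -Ω := by
    ext i j
    simp only [Matrix.transpose_apply, Matrix.neg_apply, hΩ]
    rcases lt_trichotomy (πt i) (πt j) with h1 | h1 | h1 <;>
      rcases lt_trichotomy (πb i) (πb j) with h2 | h2 | h2 <;>
      simp_all [lt_asymm, lt_irrefl, πt.injective.eq_iff, πb.injective.eq_iff]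
  -- the matrix row formula
  have hrow : ∀ (χ : A → ℝ) (α : A),
      Ω.mulVec χ α = psum πb χ (πb α) - psum πt χ (πt α) := by
    intro χ α
    have hpt : ∀ β : A, Ω α β * χ β =
        (if ((πb β : ℕ)) < (πb α : ℕ) then χ β else 0)
          - (if ((πt β : ℕ)) < (πt α : ℕ) then χ β else 0) := by
      intro β
      rw [hΩ]
      simp only [Fin.lt_def]
      by_cases heq : α = β
      · subst heq; simp [lt_irrefl]
      · have ht : (πt α : ℕ) ≠ (πt β : ℕ) := fun h => heq (πt.injective (Fin.ext h))
        have hb' : (πb α : ℕ) ≠ (πb β : ℕ) := fun h => heq (πb.injective (Fin.ext h))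
        split_ifs <;> first | ring1 | (exfalso; omega)
    unfold psum
    rw [Matrix.mulVec, dotProduct]
    calc (∑ β, Ω α β * χ β)
        = ∑ β, ((if ((πb β : ℕ)) < (πb α : ℕ) then χ β else 0)
          - (if ((πt β : ℕ)) < (πt α : ℕ) then χ β else 0)) :=
          Finset.sum_congr rfl fun β _ => hpt β
      _ = _ := by
          rw [Finset.sum_sub_distrib, ← Finset.sum_filter, ← Finset.sum_filter]
  have hker_iff : ∀ χ : A → ℝ, Ω.mulVec χ = 0 ↔
      ∀ α, psum πt χ ((πt α : ℕ)) = psum πb χ ((πb α : ℕ)) := by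
    intro χ
    constructor
    · intro h α
      have h0 : psum πb χ ((πb α : ℕ)) - psum πt χ ((πt α : ℕ)) = 0 := by
        have := congrFun h α
        rw [hrow] at this
        simpa using this
      linarith
    · intro h
      funext α
      rw [hrow, h α]
      simp
  -- cycle relations
  have hc1 : ∀ p : Fin d, c (U p.castSucc) = c (V (Fin.castSucc (πb (πt.symm p)))) := by
    intro p; rw [← hσ1, hcinv]
  have hc2 : ∀ p : Fin d, c (V p.succ) = c (U (Fin.succ (πt (πb.symm p)))) := by
    intro p; rw [← hσ2, hcinv]
  -- range D ⊆ ker Ω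
  have hcastval : ∀ (p : Fin d), (Fin.castSucc p) = (⟨(p : ℕ), by omega⟩ : Fin (d+1)) := by
    intro p; ext; simp
  have hsuccval : ∀ (p : Fin d), (Fin.succ p) = (⟨(p : ℕ) + 1, by omega⟩ : Fin (d+1)) := by
    intro p; ext; simp
  have hDker : ∀ f : Cyc → ℝ, Ω.mulVec (D f) = 0 := by
    intro f
    rw [hker_iff]
    set F : Fin (d+1) → ℝ := fun i => f (c (U i)) with hF
    set G : Fin (d+1) → ℝ := fun j => f (c (V j)) with hG
    have hDapp : ∀ α, D f α = F (Fin.succ (πt α)) - F (Fin.castSucc (πt α)) := fun α => rfl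
    have hXt : ∀ k (hk : k ≤ d), psum πt (D f) k = F ⟨k, Nat.lt_succ_of_le hk⟩ - F 0 := by
      intro k
      induction k with
      | zero =>
        intro _
        have : (⟨0, by omega⟩ : Fin (d+1)) = 0 := rfl
        rw [psum_zero, this, sub_self]
      | succ k ih =>
        intro hk
        have hk' : k < d := hk
        rw [psum_succ πt (D f) k hk', ih (le_of_lt hk'), hDapp]
        have h1 : F (Fin.succ (πt (πt.symm ⟨k, hk'⟩))) = F ⟨k + 1, by omega⟩ := by
          congr 1
          rw [Equiv.apply_symm_apply]
          ext; simp
        have h2 : F (Fin.castSucc (πt (πt.symm ⟨k, hk'⟩))) = F ⟨k, by omega⟩ := by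
          congr 1
          rw [Equiv.apply_symm_apply]
          ext; simp
        rw [h1, h2]
        ring
    have hXb : ∀ k (hk : k ≤ d), psum πb (D f) k = G ⟨k, Nat.lt_succ_of_le hk⟩ - G 0 := by
      intro k
      induction k with
      | zero =>
        intro _
        have : (⟨0, by omega⟩ : Fin (d+1)) = 0 := rfl
        rw [psum_zero, this, sub_self]
      | succ k ih =>
        intro hk
        have hk' : k < d := hk
        rw [psum_succ πb (D f) k hk', ih (le_of_lt hk'), hDapp]
        have h1 : F (Fin.succ (πt (πb.symm ⟨k, hk'⟩))) = G ⟨k + 1, by omega⟩ := by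
          show f (c (U (Fin.succ (πt (πb.symm ⟨k, hk'⟩))))) = f (c (V ⟨k + 1, by omega⟩))
          rw [← hc2 ⟨k, hk'⟩]
          congr 1
        have h2 : F (Fin.castSucc (πt (πb.symm ⟨k, hk'⟩))) = G ⟨k, by omega⟩ := by
          show f (c (U (Fin.castSucc (πt (πb.symm ⟨k, hk'⟩))))) = f (c (V ⟨k, by omega⟩))
          rw [hc1 (πt (πb.symm ⟨k, hk'⟩)), Equiv.symm_apply_apply, Equiv.apply_symm_apply]
          congr 1
        rw [h1, h2]
        ring
    intro α
    have h1 : psum πt (D f) ((πt α : ℕ)) = F (Fin.castSucc (πt α)) - F 0 := by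
      rw [hXt _ (le_of_lt (πt α).isLt), hcastval]
    have h2 : psum πb (D f) ((πb α : ℕ)) = G (Fin.castSucc (πb α)) - G 0 := by
      rw [hXb _ (le_of_lt (πb α).isLt), hcastval]
    rw [h1, h2]
    have h3 : F (Fin.castSucc (πt α)) = G (Fin.castSucc (πb α)) := by
      show f (c (U (Fin.castSucc (πt α)))) = f (c (V (Fin.castSucc (πb α))))
      rw [hc1 (πt α), Equiv.symm_apply_apply]
    have h4 : F 0 = G 0 := by show f (c (U 0)) = f (c (V 0)); rw [hUV0]
    rw [h3, h4]
  -- ker Ω ⊆ range D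
  have hkerD : ∀ χ : A → ℝ, Ω.mulVec χ = 0 → ∃ f : Cyc → ℝ, D f = χ := by
    intro χ hχ
    rw [hker_iff] at hχ
    set F : Fin (d+1) → ℝ := fun i => psum πt χ (i : ℕ) with hF
    set G : Fin (d+1) → ℝ := fun j => psum πb χ (j : ℕ) with hG
    have hF0G0 : F 0 = G 0 := by
      show psum πt χ ((0 : Fin (d+1)) : ℕ) = psum πb χ ((0 : Fin (d+1)) : ℕ)
      rw [Fin.val_zero, psum_zero, psum_zero]
    have hFGlast : F (Fin.last d) = G (Fin.last d) := by
      show psum πt χ ((Fin.last d : Fin (d+1)) : ℕ) = psum πb χ ((Fin.last d : Fin (d+1)) : ℕ)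
      rw [Fin.val_last, psum_total, psum_total]
    have hFsucc : ∀ p : Fin d, F (Fin.succ p) = F (Fin.castSucc p) + χ (πt.symm p) := by
      intro p
      show psum πt χ ((Fin.succ p : Fin (d+1)) : ℕ) = psum πt χ ((Fin.castSucc p : Fin (d+1)) : ℕ) + χ (πt.symm p)
      rw [Fin.val_succ, Fin.coe_castSucc, psum_succ πt χ (p : ℕ) p.isLt]
    have hGsucc : ∀ q : Fin d, G (Fin.succ q) = G (Fin.castSucc q) + χ (πb.symm q) := by
      intro q
      show psum πb χ ((Fin.succ q : Fin (d+1)) : ℕ) = psum πb χ ((Fin.castSucc q : Fin (d+1)) : ℕ) + χ (πb.symm q)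
      rw [Fin.val_succ, Fin.coe_castSucc, psum_succ πb χ (q : ℕ) q.isLt]
    have hbal : ∀ α, F (Fin.castSucc (πt α)) = G (Fin.castSucc (πb α)) := by
      intro α
      show psum πt χ ((Fin.castSucc (πt α) : Fin (d+1)) : ℕ)
          = psum πb χ ((Fin.castSucc (πb α) : Fin (d+1)) : ℕ)
      rw [Fin.coe_castSucc, Fin.coe_castSucc]
      exact hχ α
    set g : S → ℝ := fun s => if h : ∃ i, s = U i then F h.choose
      else G ((hrange s).resolve_left h).choose with hg
    have hgU : ∀ i, g (U i) = F i := by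
      intro i
      have h : ∃ i', U i = U i' := ⟨i, rfl⟩
      rw [hg]
      dsimp only
      rw [dif_pos h]
      exact congrArg F (hU h.choose_spec).symm
    have hgV : ∀ j, g (V j) = G j := by
      intro j
      rw [hg]
      dsimp only
      by_cases h : ∃ i, V j = U i
      · rw [dif_pos h]
        obtain ⟨hij, hcases⟩ := hdisj h.choose j h.choose_spec.symm
        rcases hcases with h0 | hl
        · rw [hij] at h0
          rw [hij, h0]
          exact hF0G0
        · rw [hij] at hl
          rw [hij, hl]
          exact hFGlast
      · rw [dif_neg h]
        have hspec := ((hrange (V j)).resolve_left h).choose_spec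
        exact congrArg G (hV hspec).symm
    have claimU : ∀ p : Fin d, g (σ (U p.castSucc)) = g (U p.castSucc) := by
      intro p
      rw [hσ1, hgV, hgU]
      have h := hbal (πt.symm p)
      rw [Equiv.apply_symm_apply] at h
      exact h.symm
    have claimV : ∀ q : Fin d, g (σ (V q.succ)) = g (V q.succ) := by
      intro q
      rw [hσ2, hgU, hgV]
      rw [hFsucc (πt (πb.symm q)), hGsucc q, Equiv.symm_apply_apply,
        hbal (πb.symm q), Equiv.apply_symm_apply]
    have hginv : ∀ s, g (σ s) = g s := by
      intro s
      have hsplit : (∃ p : Fin d, s = U (Fin.castSucc p)) ∨ (∃ q : Fin d, s = V (Fin.succ q)) := by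
        rcases hrange s with ⟨i, rfl⟩ | ⟨j, rfl⟩
        · by_cases hi : i = Fin.last d
          · right
            refine ⟨⟨d - 1, by omega⟩, ?_⟩
            rw [hi, hUVd]
            congr 1
            ext
            simp [Fin.val_last]
            omega
          · left
            have hiv : (i : ℕ) ≠ d := fun h => hi (by ext; simp [h, Fin.val_last])
            have hlt : (i : ℕ) < d := by have := i.isLt; omega
            refine ⟨⟨(i : ℕ), hlt⟩, ?_⟩
            exact congrArg U (by ext; simp)
        · by_cases hj : j = 0
          · left
            refine ⟨⟨0, by omega⟩, ?_⟩
            rw [hj, ← hUV0]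
            exact congrArg U (by ext; simp)
          · right
            have hjv : (j : ℕ) ≠ 0 := fun h => hj (by ext; simp [h])
            refine ⟨⟨(j : ℕ) - 1, by have := j.isLt; omega⟩, ?_⟩
            congr 1
            ext
            simp
            omega
      rcases hsplit with ⟨p, rfl⟩ | ⟨q, rfl⟩
      · exact claimU p
      · exact claimV q
    have hgpow : ∀ (n : ℕ) (s : S), g ((σ ^ n) s) = g s := by
      intro n
      induction n with
      | zero => intro s; simp
      | succ n ih =>
        intro s
        rw [pow_succ, Equiv.Perm.mul_apply, ih (σ s), hginv s]
    have hgc : ∀ s t, c s = c t → g s = g t := by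
      intro s t hst
      obtain ⟨n, _, hn⟩ := (hcsep s t hst).exists_pow_eq'
      rw [← hn, hgpow]
    have hfc : ∀ s : S, g (hcsurj (c s)).choose = g s :=
      fun s => hgc _ _ ((hcsurj (c s)).choose_spec)
    refine ⟨fun C => g (hcsurj C).choose, ?_⟩
    funext α
    calc D (fun C => g (hcsurj C).choose) α
        = g (hcsurj (a α)).choose - g (hcsurj (b α)).choose := rfl
      _ = g (U (Fin.succ (πt α))) - g (U (Fin.castSucc (πt α))) := by
          rw [show (hcsurj (a α)).choose = (hcsurj (c (U (Fin.succ (πt α))))).choose from rfl,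
            show (hcsurj (b α)).choose = (hcsurj (c (U (Fin.castSucc (πt α))))).choose from rfl,
            hfc, hfc]
      _ = F (Fin.succ (πt α)) - F (Fin.castSucc (πt α)) := by rw [hgU, hgU]
      _ = χ α := by
          rw [hFsucc (πt α), Equiv.symm_apply_apply]
          ring
  have hkereq : LinearMap.ker Ω.mulVecLin = LinearMap.range D := by
    ext χ
    simp only [LinearMap.mem_ker, Matrix.mulVecLin_apply, LinearMap.mem_range]
    constructor
    · intro h; obtain ⟨f, hf⟩ := hkerD χ h; exact ⟨f, hf⟩
    · rintro ⟨f, rfl⟩; exact hDker f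
  -- the boundary sum reformulation
  have hpartial : ∀ (χ : A → ℝ) (C : Cyc),
      (∑ i : Fin (d + 1), if c (U i) = C then
          ((if h : 0 < (i : ℕ) then χ (πt.symm ⟨(i : ℕ) - 1, by
              have := i.isLt; omega⟩) else 0) -
           (if h : (i : ℕ) < d then χ (πt.symm ⟨(i : ℕ), h⟩) else 0))
        else 0)
      = (∑ α : A, if a α = C then χ α else 0)
        - (∑ α : A, if b α = C then χ α else 0) := by
    intro χ C
    have hstep : ∀ i : Fin (d + 1),
        (if c (U i) = C then
          ((if h : 0 < (i : ℕ) then χ (πt.symm ⟨(i : ℕ) - 1, by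
              have := i.isLt; omega⟩) else 0) -
           (if h : (i : ℕ) < d then χ (πt.symm ⟨(i : ℕ), h⟩) else 0))
        else 0)
        = (if c (U i) = C then
            (if h : 0 < (i : ℕ) then χ (πt.symm ⟨(i : ℕ) - 1, by
              have := i.isLt; omega⟩) else 0) else 0)
          - (if c (U i) = C then
            (if h : (i : ℕ) < d then χ (πt.symm ⟨(i : ℕ), h⟩) else 0) else 0) := by
      intro i
      split_ifs <;> ring1
    rw [Finset.sum_congr rfl (fun i _ => hstep i), Finset.sum_sub_distrib]
    have hS1 : (∑ i : Fin (d + 1), (if c (U i) = C then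
            (if h : 0 < (i : ℕ) then χ (πt.symm ⟨(i : ℕ) - 1, by
              have := i.isLt; omega⟩) else 0) else 0))
        = ∑ α : A, if a α = C then χ α else 0 := by
      rw [Fin.sum_univ_succ]
      have h0 : (if c (U 0) = C then
          (if h : 0 < ((0 : Fin (d+1)) : ℕ) then χ (πt.symm ⟨((0 : Fin (d+1)) : ℕ) - 1, by
            have := (0 : Fin (d+1)).isLt; omega⟩) else 0) else 0) = 0 := by
        rw [dif_neg (by simp)]
        exact ite_self 0
      rw [h0, zero_add]
      have hterm : ∀ p : Fin d, (if c (U p.succ) = C then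
          (if h : 0 < ((p.succ : Fin (d+1)) : ℕ) then χ (πt.symm ⟨((p.succ : Fin (d+1)) : ℕ) - 1, by
            have := (p.succ : Fin (d+1)).isLt; omega⟩) else 0) else 0)
          = (if c (U p.succ) = C then χ (πt.symm p) else 0) := by
        intro p
        split_ifs with h h2
        · apply congrArg
          apply congrArg
          ext
          simp [Fin.val_succ]
        · exfalso
          apply h2
          simp [Fin.val_succ]
        · rfl
      rw [Finset.sum_congr rfl (fun p _ => hterm p)]
      rw [← Equiv.sum_comp πt (fun p => if c (U p.succ) = C then χ (πt.symm p) else 0)]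
      exact Finset.sum_congr rfl fun α _ => by rw [Equiv.symm_apply_apply]
    have hS2 : (∑ i : Fin (d + 1), (if c (U i) = C then
            (if h : (i : ℕ) < d then χ (πt.symm ⟨(i : ℕ), h⟩) else 0) else 0))
        = ∑ α : A, if b α = C then χ α else 0 := by
      rw [Fin.sum_univ_castSucc]
      have h0 : (if c (U (Fin.last d)) = C then
          (if h : ((Fin.last d : Fin (d+1)) : ℕ) < d then
            χ (πt.symm ⟨((Fin.last d : Fin (d+1)) : ℕ), h⟩) else 0) else 0) = 0 := by
        rw [dif_neg (by simp)]
        exact ite_self 0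
      rw [h0, add_zero]
      have hterm : ∀ p : Fin d, (if c (U p.castSucc) = C then
          (if h : ((p.castSucc : Fin (d+1)) : ℕ) < d then
            χ (πt.symm ⟨((p.castSucc : Fin (d+1)) : ℕ), h⟩) else 0) else 0)
          = (if c (U p.castSucc) = C then χ (πt.symm p) else 0) := by
        intro p
        split_ifs with h h2
        · apply congrArg
          apply congrArg
          ext
          simp
        · exfalso
          apply h2
          simp
        · rfl
      rw [Finset.sum_congr rfl (fun p _ => hterm p)]
      rw [← Equiv.sum_comp πt (fun p => if c (U p.castSucc) = C then χ (πt.symm p) else 0)]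
      exact Finset.sum_congr rfl fun α _ => by rw [Equiv.symm_apply_apply]
    rw [hS1, hS2]
  -- pairing identity
  have hpair : ∀ (χ : A → ℝ) (f : Cyc → ℝ),
      dotProduct χ (D f) = ∑ C : Cyc,
        f C * ((∑ α : A, if a α = C then χ α else 0)
          - (∑ α : A, if b α = C then χ α else 0)) := by
    intro χ f
    calc dotProduct χ (D f)
        = ∑ α : A, χ α * (f (a α) - f (b α)) := rfl
      _ = ∑ α : A, ∑ C : Cyc,
          ((if a α = C then f C * χ α else 0) - (if b α = C then f C * χ α else 0)) := by
          refine Finset.sum_congr rfl fun α _ => ?_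
          rw [Finset.sum_sub_distrib, Finset.sum_ite_eq, Finset.sum_ite_eq]
          simp only [Finset.mem_univ, if_true]
          ring
      _ = ∑ C : Cyc, ∑ α : A,
          ((if a α = C then f C * χ α else 0) - (if b α = C then f C * χ α else 0)) :=
          Finset.sum_comm
      _ = _ := by
          refine Finset.sum_congr rfl fun C _ => ?_
          rw [mul_sub, Finset.mul_sum, Finset.mul_sum, ← Finset.sum_sub_distrib]
          refine Finset.sum_congr rfl fun α _ => ?_
          split_ifs <;> ring1
  constructor
  · intro χ
    rw [← skew_range Ω hskew χ]
    constructor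
    · intro h ψ hψ
      obtain ⟨f, rfl⟩ := hkerD ψ hψ
      rw [hpair]
      refine Finset.sum_eq_zero fun C _ => ?_
      rw [← hpartial, h C]
      ring
    · intro h C
      have h1 := h (D (fun C' => if C' = C then (1:ℝ) else 0)) (hDker _)
      rw [hpair] at h1
      rw [hpartial]
      calc _ = ∑ C' : Cyc, (if C' = C then (1:ℝ) else 0) *
            ((∑ α : A, if a α = C' then χ α else 0)
              - (∑ α : A, if b α = C' then χ α else 0)) := by
            rw [Finset.sum_eq_single C]
            · simp
            · intro C' _ hne; simp [hne]
            · intro h; exact absurd (Finset.mem_univ C) h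
        _ = 0 := h1
  -- rank computation
  · have hone : (fun _ => (1 : ℝ) : Cyc → ℝ) ≠ 0 := by
      intro h
      have := congrFun h (c (U 0))
      norm_num at this
    have hkerD1 : LinearMap.ker D = Submodule.span ℝ {(fun _ => (1 : ℝ) : Cyc → ℝ)} := by
      ext f
      rw [LinearMap.mem_ker, Submodule.mem_span_singleton]
      constructor
      · intro hf
        have key : ∀ p : Fin d, f (c (U p.succ)) = f (c (U p.castSucc)) := by
          intro p
          have h1 : f (a (πt.symm p)) - f (b (πt.symm p)) = 0 := congrFun hf (πt.symm p)
          have h2 : a (πt.symm p) = c (U p.succ) := by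
            show c (U (πt (πt.symm p)).succ) = c (U p.succ)
            rw [Equiv.apply_symm_apply]
          have h3 : b (πt.symm p) = c (U p.castSucc) := by
            show c (U (πt (πt.symm p)).castSucc) = c (U p.castSucc)
            rw [Equiv.apply_symm_apply]
          rw [h2, h3] at h1
          linarith
        have hall : ∀ k (hk : k ≤ d), f (c (U ⟨k, Nat.lt_succ_of_le hk⟩)) = f (c (U 0)) := by
          intro k
          induction k with
          | zero => intro _; rfl
          | succ k ih =>
            intro hk
            have hk' : k < d := hk
            have h1 : (⟨k + 1, Nat.lt_succ_of_le hk⟩ : Fin (d+1)) = (⟨k, hk'⟩ : Fin d).succ := by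
              ext; simp
            have h2 : (⟨k, Nat.lt_succ_of_le (le_of_lt hk')⟩ : Fin (d+1))
                = (⟨k, hk'⟩ : Fin d).castSucc := by
              ext; simp
            rw [h1, key ⟨k, hk'⟩, ← h2, ih (le_of_lt hk')]
        have hallI : ∀ i : Fin (d+1), f (c (U i)) = f (c (U 0)) := by
          intro i
          have h1 : (⟨(i : ℕ), Nat.lt_succ_of_le (Nat.lt_succ_iff.mp i.isLt)⟩ : Fin (d+1)) = i := by
            ext; simp
          rw [← h1]
          exact hall (i : ℕ) (Nat.lt_succ_iff.mp i.isLt)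
        have hallS : ∀ s : S, f (c s) = f (c (U 0)) := by
          intro s
          rcases hrange s with ⟨i, rfl⟩ | ⟨j, rfl⟩
          · exact hallI i
          · by_cases hj : j = 0
            · rw [hj, ← hUV0]
            · have hjv : (j : ℕ) ≠ 0 := fun h => hj (by ext; simp [h])
              have hjd : (j : ℕ) - 1 < d := by have := j.isLt; omega
              have h1 : j = (⟨(j : ℕ) - 1, hjd⟩ : Fin d).succ := by
                ext; simp; omega
              rw [h1, hc2 ⟨(j : ℕ) - 1, hjd⟩]
              exact hallI _
        refine ⟨f (c (U 0)), ?_⟩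
        funext C
        obtain ⟨s, rfl⟩ := hcsurj C
        have := hallS s
        simp only [Pi.smul_apply, smul_eq_mul, mul_one]
        exact this.symm
      · rintro ⟨r, rfl⟩
        funext α
        show r • (fun _ => (1:ℝ)) (a α) - r • (fun _ => (1:ℝ)) (b α) = 0
        simp
    have hrank1 : Module.finrank ℝ (LinearMap.ker D) = 1 := by
      rw [hkerD1]
      exact finrank_span_singleton hone
    have hrn1 : Module.finrank ℝ (LinearMap.range D) + Module.finrank ℝ (LinearMap.ker D)
        = Module.finrank ℝ (Cyc → ℝ) := LinearMap.finrank_range_add_finrank_ker D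
    have hpi1 : Module.finrank ℝ (Cyc → ℝ) = Fintype.card Cyc := Module.finrank_pi ℝ
    have hrn2 : Ω.rank + Module.finrank ℝ (LinearMap.ker Ω.mulVecLin)
        = Module.finrank ℝ (A → ℝ) := by
      have h1 : Ω.rank = Module.finrank ℝ (LinearMap.range Ω.mulVecLin) := rfl
      rw [h1]
      exact LinearMap.finrank_range_add_finrank_ker _
    have hpi2 : Module.finrank ℝ (A → ℝ) = Fintype.card A := Module.finrank_pi ℝ
    rw [hkereq] at hrn2
    omega
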